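/- Let σ ≥ 0 and suppose M(s) - μ* = (1,s)ᵀX(1,s) + p(‖s‖)² + ‖s‖q(‖s‖)² for all s ∈ ℝⁿ, where X ⪰ 0, p has degree exactly 2 with leading coefficient √σ/2, q has degree ≤ 1, and μ* = M(s*) for a global minimizer s* ≠ 0. Then ‖s*‖(β + 3σ‖s*‖) ≥ 0. -/

import Mathlib

open Matrix Polynomial

noncomputable def enorm2 {n : ℕ} (s : Fin n → ℝ) : ℝ := Real.sqrt (s ⬝ᵥ s)

noncomputable def Mfun {n : ℕ} (f0 : ℝ) (g : Fin n → ℝ)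
    (H : Matrix (Fin n) (Fin n) ℝ) (β σ : ℝ) (s : Fin n → ℝ) : ℝ :=
  f0 + g ⬝ᵥ s + (1/2) * (s ⬝ᵥ (H *ᵥ s)) + (β/6) * enorm2 s ^ 3 + (σ/4) * enorm2 s ^ 4

noncomputable def Bmat {n : ℕ} (H : Matrix (Fin n) (Fin n) ℝ) (β σ : ℝ)
    (s : Fin n → ℝ) : Matrix (Fin n) (Fin n) ℝ :=
  H + ((β/2) * enorm2 s) • (1 : Matrix (Fin n) (Fin n) ℝ)
    + (σ * enorm2 s ^ 2) • (1 : Matrix (Fin n) (Fin n) ℝ)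

lemma enorm_smul' {n : ℕ} (c : ℝ) (s : Fin n → ℝ) : enorm2 (c • s) = |c| * enorm2 s := by
  unfold enorm2
  have h : (c • s) ⬝ᵥ (c • s) = c^2 * (s ⬝ᵥ s) := by
    rw [smul_dotProduct, dotProduct_smul, smul_eq_mul, smul_eq_mul]; ring
  rw [h, Real.sqrt_mul (sq_nonneg c), Real.sqrt_sq_eq_abs]

lemma enorm2_pos' {n : ℕ} (s : Fin n → ℝ) (hs : s ≠ 0) : 0 < enorm2 s := by
  unfold enorm2
  apply Real.sqrt_pos.mpr
  rcases lt_or_eq_of_le (Finset.sum_nonneg (fun i _ => mul_self_nonneg (s i))) with h | h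
  · exact h
  · exact absurd ((dotProduct_self_eq_zero).mp h.symm) hs


set_option maxHeartbeats 2000000 in
theorem stmt14 {n : ℕ} (f0 : ℝ) (g : Fin n → ℝ) (H : Matrix (Fin n) (Fin n) ℝ)
    (hH : H.IsSymm) (β σ : ℝ) (hσ : 0 ≤ σ)
    (X : Matrix (Fin (n+1)) (Fin (n+1)) ℝ) (hX : X.PosSemidef)
    (p q : Polynomial ℝ) (hp : p.degree = 2)
    (hplead : p.coeff 2 = Real.sqrt σ / 2) (hq : q.degree ≤ 1)
    (sstar : Fin n → ℝ) (hs : sstar ≠ 0)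
    (hmin : ∀ s : Fin n → ℝ, Mfun f0 g H β σ sstar ≤ Mfun f0 g H β σ s)
    (hrep : ∀ s : Fin n → ℝ,
      Mfun f0 g H β σ s - Mfun f0 g H β σ sstar =
        (Fin.cons 1 s) ⬝ᵥ (X *ᵥ (Fin.cons 1 s))
          + (p.eval (enorm2 s))^2 + enorm2 s * (q.eval (enorm2 s))^2) :
    0 ≤ enorm2 sstar * (β + 3 * σ * enorm2 sstar) := by
  set r := enorm2 sstar with hrdef
  have hr : 0 < r := enorm2_pos' sstar hs
  set A := p.coeff 2 with hA
  set B := p.coeff 1 with hB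
  set Cc := p.coeff 0 with hC
  set D := q.coeff 1 with hD
  set E := q.coeff 0 with hE
  -- A^2 = σ/4
  have hA2 : A ^ 2 = σ / 4 := by
    rw [hplead, div_pow, Real.sq_sqrt hσ]; norm_num
  -- eval formulas
  have hpnd : p.natDegree = 2 := Polynomial.natDegree_eq_of_degree_eq_some hp
  have hpe : ∀ z : ℝ, p.eval z = Cc + B * z + A * z ^ 2 := by
    intro z
    rw [Polynomial.eval_eq_sum_range, hpnd]
    simp [Finset.sum_range_succ]
    try ring
  have hqnd : q.natDegree < 2 :=
    Nat.lt_succ_of_le (Polynomial.natDegree_le_iff_degree_le.mpr hq)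
  have hqe : ∀ z : ℝ, q.eval z = E + D * z := by
    intro z
    rw [Polynomial.eval_eq_sum_range' hqnd]
    simp [Finset.sum_range_succ]
    try ring
  -- PSD nonnegativity
  have hXpos : ∀ x : Fin (n+1) → ℝ, 0 ≤ x ⬝ᵥ (X *ᵥ x) := by
    intro x
    simpa using hX.dotProduct_mulVec_nonneg x
  -- p and q vanish at r
  have e0 := hrep sstar
  rw [sub_self] at e0
  have hpr : p.eval r = 0 := by
    have h2 : p.eval r ^ 2 = 0 := by
      nlinarith [hXpos (Fin.cons 1 sstar), sq_nonneg (p.eval r), sq_nonneg (q.eval r),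
        mul_nonneg hr.le (sq_nonneg (q.eval r))]
    exact pow_eq_zero_iff two_ne_zero |>.mp h2
  have hqr : q.eval r = 0 := by
    have h2 : q.eval r ^ 2 = 0 := by
      have hrq : r * q.eval r ^ 2 = 0 := by
        nlinarith [hXpos (Fin.cons 1 sstar), sq_nonneg (q.eval r),
          mul_nonneg hr.le (sq_nonneg (q.eval r))]
      rcases mul_eq_zero.mp hrq with h | h
      · exact absurd h hr.ne'
      · exact h
    exact pow_eq_zero_iff two_ne_zero |>.mp h2
  -- Mfun along the line
  have hM : ∀ c : ℝ, Mfun f0 g H β σ (c • sstar) =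
      f0 + c * (g ⬝ᵥ sstar) + c ^ 2 * ((1/2) * (sstar ⬝ᵥ (H *ᵥ sstar)))
        + (β/6) * (|c| * r) ^ 3 + (σ/4) * (|c| * r) ^ 4 := by
    intro c
    unfold Mfun
    rw [enorm_smul', dotProduct_smul, smul_dotProduct, Matrix.mulVec_smul, dotProduct_smul,
      smul_eq_mul, smul_eq_mul, smul_eq_mul, ← hrdef]
    ring
  -- X-term along the line
  set v0 : Fin (n+1) → ℝ := Fin.cons 1 0 with hv0
  set v1 : Fin (n+1) → ℝ := Fin.cons 0 sstar with hv1
  have hcons : ∀ c : ℝ, (Fin.cons 1 (c • sstar) : Fin (n+1) → ℝ) = v0 + c • v1 := by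
    intro c
    funext i
    refine Fin.cases ?_ (fun j => ?_) i <;> simp [hv0, hv1]
  set y0 : ℝ := v0 ⬝ᵥ (X *ᵥ v0) with hy0
  set y1 : ℝ := v0 ⬝ᵥ (X *ᵥ v1) + v1 ⬝ᵥ (X *ᵥ v0) with hy1
  set y2 : ℝ := v1 ⬝ᵥ (X *ᵥ v1) with hy2
  have hXq : ∀ c : ℝ, (Fin.cons 1 (c • sstar) : Fin (n+1) → ℝ) ⬝ᵥ (X *ᵥ (Fin.cons 1 (c • sstar)))
      = y0 + c * y1 + c ^ 2 * y2 := by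
    intro c
    rw [hcons c, Matrix.mulVec_add, Matrix.mulVec_smul, add_dotProduct, smul_dotProduct,
      dotProduct_add, dotProduct_add, dotProduct_smul, dotProduct_smul, hy0, hy1, hy2,
      smul_eq_mul, smul_eq_mul, smul_eq_mul]
    ring
  -- the key polynomial identity along the ray
  have key : ∀ c : ℝ, 0 < c →
      (2*f0 - 2*(Mfun f0 g H β σ sstar) - 2*y0 - 2*Cc^2)
      + (-4*B*Cc*r - 2*E^2*r) * c
      + ((sstar ⬝ᵥ (H *ᵥ sstar)) - 2*y2 - 2*B^2*r^2 - 4*A*Cc*r^2 - 4*D*E*r^2) * c^2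
      + ((β/3)*r^3 - 4*A*B*r^3 - 2*D^2*r^3) * c^3 = 0 := by
    intro c hc
    have e1 := hrep (c • sstar)
    have e2 := hrep ((-c) • sstar)
    rw [hM c, hXq c, enorm_smul', abs_of_pos hc, ← hrdef, hpe, hqe] at e1
    rw [hM (-c), hXq (-c), enorm_smul', abs_neg, abs_of_pos hc, ← hrdef, hpe, hqe] at e2
    linear_combination e1 + e2 + (2*r^4*c^4) * hA2
  have h1 := key 1 one_pos
  have h2 := key 2 two_pos
  have h3 := key 3 three_pos
  have h4 := key 4 four_pos
  have hk1 : -4*B*Cc*r - 2*E^2*r = 0 := by linarith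
  have hk3 : (β/3)*r^3 - 4*A*B*r^3 - 2*D^2*r^3 = 0 := by linarith
  -- p(r) = 0, q(r) = 0 in coefficient form
  have hCr : Cc + B * r + A * r ^ 2 = 0 := by rw [← hpe]; exact hpr
  have hEr : E + D * r = 0 := by rw [← hqe]; exact hqr
  -- conclude
  have hfinal : r^3 * (r * (β + 3 * σ * r)) = 12 * r^3 * (A*r + B)^2 := by
    linear_combination (3*r)*hk3 - (12*r^5)*hA2 - (3*r)*hk1 + (6*r^2*(D*r - E))*hEr - (12*B*r^2)*hCr
  nlinarith [hfinal, pow_pos hr 3, sq_nonneg (A*r + B),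
    mul_nonneg (pow_pos hr 3).le (sq_nonneg (A*r + B))]
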